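/- Let f : E → ℝ be differentiable with ∇f locally Lipschitz continuous. Let γ : (-∞, 0] → E satisfy γ'(t) = ∇f(γ(t)) for all t ≤ 0 (i.e., γ is an integral curve of the gradient vector field of f). Suppose (t_n) is a sequence with t_n → −∞ such that the limit z₁ := lim_{n→∞} γ(t_n) exists in E. Then z₁ is a critical point of f, i.e., ∇f(z₁) = 0. -/

import Mathlib

open Set Filter Metric

/-- Subsequential limits at `t → -∞` of a negative-time integral curve of the
gradient vector field of `f` (with locally Lipschitz gradient) are critical
points of `f`. -/
theorem gradient_eq_zero_of_tendsto_gradient_flow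
    {E : Type*} [NormedAddCommGroup E] [InnerProductSpace ℝ E] [CompleteSpace E]
    (f : E → ℝ) (hf : Differentiable ℝ f)
    (hlip : LocallyLipschitz (gradient f))
    (γ : ℝ → E) (hγ : ∀ t : ℝ, t ≤ 0 → HasDerivAt γ (gradient f (γ t)) t)
    (t : ℕ → ℝ) (ht : Filter.Tendsto t Filter.atTop Filter.atBot)
    (z₁ : E) (hz : Filter.Tendsto (fun n => γ (t n)) Filter.atTop (nhds z₁)) :
    gradient f z₁ = 0 := by
  by_contra hne
  set g := gradient f with hgdef
  have hgc : Continuous g := hlip.continuous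
  have hc : (0:ℝ) < ‖g z₁‖ := norm_pos_iff.mpr hne
  set c := ‖g z₁‖ with hcdef
  -- a closed ball around z₁ where the gradient is pinched between c/2 and 2c
  obtain ⟨r, hr0, hball⟩ : ∃ r > 0, ∀ x ∈ closedBall z₁ r, ‖g x - g z₁‖ ≤ c/2 := by
    obtain ⟨d, hd0, hd⟩ := Metric.continuousAt_iff.mp (hgc.continuousAt (x := z₁)) (c/2)
      (by positivity)
    refine ⟨d/2, by positivity, fun x hx => le_of_lt ?_⟩
    have hxd : dist x z₁ < d := lt_of_le_of_lt (mem_closedBall.mp hx) (by linarith)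
    simpa [dist_eq_norm] using hd hxd
  have hlow : ∀ x ∈ closedBall z₁ r, c/2 ≤ ‖g x‖ := by
    intro x hx
    have h1 := hball x hx
    have h2 := norm_sub_norm_le (g z₁) (g x)
    rw [norm_sub_rev] at h2
    simp only [← hcdef] at h2
    linarith
  have hup : ∀ x ∈ closedBall z₁ r, ‖g x‖ ≤ 2*c := by
    intro x hx
    have h1 := hball x hx
    have h2 := norm_sub_norm_le (g x) (g z₁)
    simp only [← hcdef] at h2
    linarith
  set M : ℝ := 2*c with hMdef
  have hM0 : 0 < M := by positivity
  set δ : ℝ := r/(4*M) with hδdef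
  have hδ0 : 0 < δ := by positivity
  have hMδ : M * δ = r/4 := by rw [hδdef, mul_div_assoc', div_eq_div_iff (by positivity) (by norm_num)]; ring
  -- f along the curve
  set F := fun u => f (γ u) with hFdef
  have hFd : ∀ s : ℝ, s ≤ 0 → HasDerivAt F (‖g (γ s)‖^2) s := by
    intro s hs
    have h1 := (hf (γ s)).hasGradientAt.hasFDerivAt.comp_hasDerivAt s (hγ s hs)
    refine h1.congr_deriv ?_
    simp only [InnerProductSpace.toDual_apply_apply, real_inner_self_eq_norm_sq, hgdef]
  have hFc : ContinuousOn F (Iic (0:ℝ)) :=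
    fun s hs => ((hFd s hs).continuousAt).continuousWithinAt
  have hFmono : MonotoneOn F (Iic (0:ℝ)) := by
    apply monotoneOn_of_deriv_nonneg (convex_Iic 0) hFc
    · intro x hx
      rw [interior_Iic] at hx
      exact ((hFd x hx.le).differentiableAt).differentiableWithinAt
    · intro x hx
      rw [interior_Iic] at hx
      rw [(hFd x hx.le).deriv]
      positivity
  have hFt : Tendsto (fun n => F (t n)) atTop (nhds (f z₁)) :=
    (hf.continuous.tendsto z₁).comp hz
  have hFlb : ∀ s ≤ (0:ℝ), f z₁ ≤ F s := by
    intro s hs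
    refine le_of_tendsto hFt ?_
    filter_upwards [ht.eventually_le_atBot s] with n hn
    exact hFmono (le_trans hn hs : t n ∈ Iic (0:ℝ)) hs hn
  -- choose the reference index n₀
  obtain ⟨n₀, hn₀lt, hn₀le⟩ : ∃ n₀, F (t n₀) < f z₁ + c^2*δ/8 ∧ t n₀ ≤ 0 := by
    have h1 : ∀ᶠ n in atTop, F (t n) < f z₁ + c^2*δ/8 :=
      hFt.eventually_lt_const (by have := mul_pos (pow_pos hc 2) hδ0; linarith)
    exact (h1.and (ht.eventually_le_atBot 0)).exists
  -- choose n far in the past and close to z₁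
  obtain ⟨n, hn1, hn2⟩ : ∃ n, t n ≤ t n₀ - δ ∧ dist (γ (t n)) z₁ ≤ r/2 := by
    have h2 : ∀ᶠ n in atTop, dist (γ (t n)) z₁ ≤ r/2 := by
      filter_upwards [hz.eventually (Metric.closedBall_mem_nhds z₁ (by positivity : (0:ℝ) < r/2))]
        with n hn using mem_closedBall.mp hn
    exact ((ht.eventually_le_atBot (t n₀ - δ)).and h2).exists
  set a := t n with hadef
  set b := a + δ with hbdef
  have hab : a ≤ b := by simp [hbdef]; linarith
  have hbn₀ : b ≤ t n₀ := by simp [hbdef]; linarith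
  have hb0 : b ≤ 0 := le_trans hbn₀ hn₀le
  have ha0 : a ≤ 0 := le_trans (le_trans (le_add_of_nonneg_right hδ0.le) hb0) le_rfl
  -- confinement: the curve stays in the ball on [a, b]
  set S := {x : ℝ | ∀ u ∈ Icc a x, γ u ∈ closedBall z₁ r} with hSdef
  have key : Icc a b ⊆ S := by
    apply IsClosed.Icc_subset_of_forall_exists_gt
    · -- IsClosed (S ∩ Icc a b)
      apply IsSeqClosed.isClosed
      intro x L hx hL
      have hLI : L ∈ Icc a b := isClosed_Icc.mem_of_tendsto hL
        (Eventually.of_forall fun k => (hx k).2)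
      refine ⟨?_, hLI⟩
      intro u hu
      rcases eq_or_lt_of_le hu.2 with huL | huL
      · subst huL
        have hcontu : ContinuousAt γ u := (hγ u (le_trans hLI.2 hb0)).continuousAt
        refine isClosed_closedBall.mem_of_tendsto (hcontu.tendsto.comp hL) ?_
        · exact Eventually.of_forall fun k =>
            (hx k).1 (x k) ⟨(hx k).2.1, le_rfl⟩
      · obtain ⟨k, hk⟩ := (hL.eventually (eventually_gt_nhds huL)).exists
        exact (hx k).1 u ⟨hu.1, hk.le⟩
    · -- a ∈ S
      intro u hu
      have : u = a := le_antisymm hu.2 hu.1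
      subst this
      exact mem_closedBall.mpr (le_trans hn2 (by linarith))
    · -- the induction step
      rintro x ⟨hxS, hxa, hxb⟩ y hy
      have hsub : ∀ u ∈ Icc a x, u ≤ (0:ℝ) := fun u hu => le_trans hu.2 (le_trans hxb.le hb0)
      have hder : ∀ u ∈ Icc a x, HasDerivWithinAt γ (g (γ u)) (Icc a x) u :=
        fun u hu => (hγ u (hsub u hu)).hasDerivWithinAt
      have hbd : ∀ u ∈ Icc a x, ‖g (γ u)‖ ≤ M := fun u hu => hup _ (hxS u hu)
      have hEst : ‖γ x - γ a‖ ≤ M * ‖x - a‖ :=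
        Convex.norm_image_sub_le_of_norm_hasDerivWithin_le hder hbd (convex_Icc a x)
          (left_mem_Icc.mpr hxa) (right_mem_Icc.mpr hxa)
      have hxa' : x - a ≤ δ := by
        have : x < a + δ := hxb
        linarith
      have hnorm : ‖x - a‖ = x - a := by
        rw [Real.norm_eq_abs, abs_of_nonneg (by linarith)]
      have hdx : dist (γ x) z₁ < r := by
        have h1 : dist (γ x) (γ a) ≤ M * δ := by
          rw [dist_eq_norm]
          calc ‖γ x - γ a‖ ≤ M * ‖x - a‖ := hEst
            _ ≤ M * δ := by rw [hnorm]; exact mul_le_mul_of_nonneg_left hxa' hM0.le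
        have h2 : dist (γ a) z₁ ≤ r/2 := hn2
        calc dist (γ x) z₁ ≤ dist (γ x) (γ a) + dist (γ a) z₁ := dist_triangle _ _ _
          _ ≤ r/4 + r/2 := by rw [← hMδ]; linarith
          _ < r := by linarith
      have hcontx : ContinuousAt (fun u => dist (γ u) z₁) x :=
        ((hγ x (le_trans hxb.le hb0)).continuousAt).dist continuousAt_const
      have hev : ∀ᶠ u in nhds x, dist (γ u) z₁ < r := hcontx.tendsto.eventually_lt_const hdx
      obtain ⟨ε, hε0, hε⟩ := Metric.eventually_nhds_iff.mp hev
      refine ⟨min (x + ε/2) y, ?_, ?_, ?_⟩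
      · -- ∈ S
        intro u hu
        rcases le_or_gt u x with hux | hux
        · exact hxS u ⟨hu.1, hux⟩
        · have hu2 : u ≤ x + ε/2 := le_trans hu.2 (min_le_left _ _)
          have : dist u x < ε := by
            rw [Real.dist_eq, abs_of_nonneg (by linarith)]
            linarith
          exact mem_closedBall.mpr (hε this).le
      · exact lt_min (by linarith) hy
      · exact min_le_right _ _
  -- quantitative increase of F on [a, b]
  have hball_ab : ∀ u ∈ Icc a b, γ u ∈ closedBall z₁ r :=
    fun u hu => key (right_mem_Icc.mpr hab) u hu
  set G := fun u => F u - c^2/4 * u with hGdef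
  have hGd : ∀ u ∈ Icc a b, HasDerivAt G (‖g (γ u)‖^2 - c^2/4) u := by
    intro u hu
    have h1 := (hFd u (le_trans hu.2 hb0)).sub ((hasDerivAt_id u).const_mul (c^2/4))
    refine h1.congr_deriv ?_; ring
  have hGmono : MonotoneOn G (Icc a b) := by
    apply monotoneOn_of_deriv_nonneg (convex_Icc a b)
    · exact fun u hu => ((hGd u hu).continuousAt).continuousWithinAt
    · intro u hu
      rw [interior_Icc] at hu
      exact ((hGd u (Ioo_subset_Icc_self hu)).differentiableAt).differentiableWithinAt
    · intro u hu
      rw [interior_Icc] at hu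
      rw [(hGd u (Ioo_subset_Icc_self hu)).deriv]
      have h1 : c/2 ≤ ‖g (γ u)‖ := hlow _ (hball_ab u (Ioo_subset_Icc_self hu))
      have h2 : (c/2)^2 ≤ ‖g (γ u)‖^2 := pow_le_pow_left₀ (by positivity) h1 2
      have : (c/2)^2 = c^2/4 := by ring
      linarith
  have hGab : G a ≤ G b := hGmono (left_mem_Icc.mpr hab) (right_mem_Icc.mpr hab) hab
  have hinc : F a + c^2/4 * δ ≤ F b := by
    simp only [hGdef, hbdef] at hGab
    linarith [hGab]
  -- contradiction
  have h1 : f z₁ ≤ F a := hFlb a ha0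
  have h2 : F b ≤ F (t n₀) := hFmono (hb0 : b ∈ Iic (0:ℝ)) hn₀le hbn₀
  have h3 : 0 < c^2*δ := by positivity
  linarith
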